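/- Let p be a prime, m ≥ 1 an integer, D = p^m, and g ≥ 2, where additionally m ≥ 2 and g ≥ 3 in case p ∈ {2, 3}. Then the subgroup of the symplectic group Sp(2g, ℤ/Dℤ) generated by the set of D-th powers {A^D : A ∈ Sp(2g, ℤ/Dℤ)} is the whole group Sp(2g, ℤ/Dℤ). -/

import Mathlib

open Matrix

set_option linter.unusedSectionVars false
namespace SpGen

variable {R : Type*} [CommRing R]
variable {n : Type*} [DecidableEq n] [Fintype n]

/-- The symplectic form. -/
def om (x y : n ⊕ n → R) : R := x ⬝ᵥ (J n R) *ᵥ y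

/-- rank-one building block `v wᵀ J`. -/
def Qm (u v : n ⊕ n → R) : Matrix (n ⊕ n) (n ⊕ n) R := vecMulVec u v * J n R

/-- transvection matrix -/
def Tm (v : n ⊕ n → R) (c : R) : Matrix (n ⊕ n) (n ⊕ n) R := 1 + c • Qm v v

/-- "double transvection" -/
def Em (u v : n ⊕ n → R) (c : R) : Matrix (n ⊕ n) (n ⊕ n) R := 1 + c • (Qm u v + Qm v u)

lemma J_mulVec (x : n ⊕ n → R) :
    (J n R) *ᵥ x = Sum.elim (fun i => -x (Sum.inr i)) (fun i => x (Sum.inl i)) := by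
  rw [J, fromBlocks_mulVec]
  funext i
  cases i with
  | inl i => simp [mulVec, dotProduct, Matrix.one_apply]
  | inr i => simp [mulVec, dotProduct, Matrix.one_apply]

lemma om_def (x y : n ⊕ n → R) :
    om x y = ∑ i, (x (Sum.inr i) * y (Sum.inl i) - x (Sum.inl i) * y (Sum.inr i)) := by
  rw [om, J_mulVec, dotProduct, Fintype.sum_sum_type]
  simp [Finset.sum_sub_distrib, mul_comm]
  ring

lemma om_self (x : n ⊕ n → R) : om x x = 0 := by
  rw [om_def]; simp [mul_comm]

lemma om_antisymm (x y : n ⊕ n → R) : om x y = - om y x := by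
  rw [om_def, om_def, ← Finset.sum_neg_distrib]
  congr 1; funext i; ring

lemma om_add_left (x y z : n ⊕ n → R) : om (x + y) z = om x z + om y z := by
  simp [om, add_dotProduct]

lemma om_add_right (x y z : n ⊕ n → R) : om x (y + z) = om x y + om x z := by
  simp [om, mulVec_add, dotProduct_add]

lemma om_sub_left (x y z : n ⊕ n → R) : om (x - y) z = om x z - om y z := by
  simp [om, sub_dotProduct]

lemma om_sub_right (x y z : n ⊕ n → R) : om x (y - z) = om x y - om x z := by
  simp [om, mulVec_sub, dotProduct_sub]

lemma om_smul_left (c : R) (x z : n ⊕ n → R) : om (c • x) z = c * om x z := by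
  simp [om, smul_dotProduct]

lemma om_smul_right (c : R) (x z : n ⊕ n → R) : om x (c • z) = c * om x z := by
  simp [om, mulVec_smul, dotProduct_smul, smul_eq_mul]

/-- The basis vectors. -/
def e (i : n ⊕ n) : n ⊕ n → R := Pi.single i 1

lemma om_e_inl_right (x : n ⊕ n → R) (j : n) : om x (e (Sum.inl j)) = x (Sum.inr j) := by
  rw [om_def]
  rw [Finset.sum_eq_single j]
  · simp [e]
  · intro b _ hb; simp [e, Pi.single_apply, hb]
  · simp
lemma om_e_inr_right (x : n ⊕ n → R) (j : n) : om x (e (Sum.inr j)) = -x (Sum.inl j) := by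
  rw [om_def]
  rw [Finset.sum_eq_single j]
  · simp [e]
  · intro b _ hb; simp [e, Pi.single_apply, hb]
  · simp
lemma om_e_inl_left (x : n ⊕ n → R) (j : n) : om (e (Sum.inl j)) x = -x (Sum.inr j) := by
  rw [om_antisymm, om_e_inl_right]
lemma om_e_inr_left (x : n ⊕ n → R) (j : n) : om (e (Sum.inr j)) x = x (Sum.inl j) := by
  rw [om_antisymm, om_e_inr_right, neg_neg]

-- vecMulVec algebra
lemma vmv_mul_vmv (a b c d : n ⊕ n → R) (M : Matrix (n ⊕ n) (n ⊕ n) R) :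
    vecMulVec a b * M * vecMulVec c d = (b ⬝ᵥ M *ᵥ c) • vecMulVec a d := by
  ext i j
  simp only [mul_apply, vecMulVec_apply, Matrix.smul_apply, smul_eq_mul, dotProduct, mulVec,
    Finset.sum_mul, Finset.mul_sum]
  rw [Finset.sum_comm]
  apply Finset.sum_congr rfl; intro k _
  apply Finset.sum_congr rfl; intro l _
  ring

lemma mul_vmv (M : Matrix (n ⊕ n) (n ⊕ n) R) (a b : n ⊕ n → R) :
    M * vecMulVec a b = vecMulVec (M *ᵥ a) b := by
  ext i j; simp [mul_apply, vecMulVec_apply, mulVec, dotProduct, Finset.sum_mul, add_mul, mul_assoc]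

lemma vmv_mul (M : Matrix (n ⊕ n) (n ⊕ n) R) (a b : n ⊕ n → R) :
    vecMulVec a b * M = vecMulVec a (b ᵥ* M) := by
  ext i j; simp [mul_apply, vecMulVec_apply, vecMul, dotProduct, Finset.mul_sum, mul_add, mul_assoc]

lemma vmv_transpose (a b : n ⊕ n → R) : (vecMulVec a b)ᵀ = vecMulVec b a := by
  ext i j; simp [vecMulVec_apply, mul_comm]

lemma vmv_add_left (a b c : n ⊕ n → R) :
    vecMulVec (a + b) c = vecMulVec a c + vecMulVec b c := by
  ext i j; simp [vecMulVec_apply]; ring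

lemma vmv_add_right (a b c : n ⊕ n → R) :
    vecMulVec a (b + c) = vecMulVec a b + vecMulVec a c := by
  ext i j; simp [vecMulVec_apply]; ring

lemma vmv_smul (c : R) (a b : n ⊕ n → R) :
    vecMulVec (c • a) (c • b) = (c * c) • vecMulVec a b := by
  ext i j; simp [vecMulVec_apply]; ring

lemma Qm_mul_Qm (a b c d : n ⊕ n → R) : Qm a b * Qm c d = om b c • Qm a d := by
  rw [Qm, Qm, Qm, om, ← Matrix.mul_assoc, vmv_mul_vmv, smul_mul_assoc]

lemma Qm_add_left (a b c : n ⊕ n → R) : Qm (a + b) c = Qm a c + Qm b c := by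
  rw [Qm, Qm, Qm, vmv_add_left, add_mul]

lemma Qm_add_right (a b c : n ⊕ n → R) : Qm a (b + c) = Qm a b + Qm a c := by
  rw [Qm, Qm, Qm, vmv_add_right, add_mul]

lemma Qm_smul (c : R) (a b : n ⊕ n → R) : Qm (c • a) (c • b) = (c * c) • Qm a b := by
  rw [Qm, Qm, vmv_smul, smul_mul_assoc]

lemma Qm_transpose_mul_J (a b : n ⊕ n → R) :
    (Qm a b)ᵀ * J n R = - (J n R * Qm b a) := by
  rw [Qm, Qm, transpose_mul, vmv_transpose, J_transpose]
  simp [Matrix.neg_mul, Matrix.mul_neg, Matrix.mul_assoc]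


lemma vmv_map (M : Matrix (n ⊕ n) (n ⊕ n) R) (a b : n ⊕ n → R) :
    M * vecMulVec a b * Mᵀ = vecMulVec (M *ᵥ a) (M *ᵥ b) := by
  rw [mul_vmv, vmv_mul, vecMul_transpose]

lemma vmv_mulVec (u v y : n ⊕ n → R) : (vecMulVec u v) *ᵥ y = (v ⬝ᵥ y) • u := by
  funext i
  simp only [mulVec, vecMulVec_apply, dotProduct, Fintype.sum_sum_type, smul_eq_mul,
    Pi.smul_apply, Finset.mul_sum, mul_assoc, mul_add]
  rw [add_mul, Finset.sum_mul, Finset.sum_mul]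
  simp [mul_comm, mul_left_comm]

lemma Qm_mulVec (u v x : n ⊕ n → R) : (Qm u v) *ᵥ x = om v x • u := by
  rw [Qm, ← mulVec_mulVec, vmv_mulVec, om]

lemma Tm_mulVec (v x : n ⊕ n → R) (c : R) : (Tm v c) *ᵥ x = x + (c * om v x) • v := by
  rw [Tm, add_mulVec, one_mulVec, smul_mulVec, Qm_mulVec, smul_smul]

lemma one_add_mul_one_add (A B : Matrix (n ⊕ n) (n ⊕ n) R) (a b : R) :
    (1 + a • A) * (1 + b • B) = 1 + (a • A + b • B + (a * b) • (A * B)) := by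
  simp only [Matrix.mul_add, Matrix.add_mul, Matrix.mul_one, Matrix.one_mul,
    Matrix.smul_mul, Matrix.mul_smul, smul_smul]
  module

lemma mem_one_add {A : Matrix (n ⊕ n) (n ⊕ n) R} (hA : Aᵀ * J n R = -(J n R * A))
    (hAA : A * A = 0) (c : R) : (1 + c • A) ∈ symplecticGroup n R := by
  rw [SymplecticGroup.mem_iff']
  have hATJA : Aᵀ * J n R * A = 0 := by
    rw [hA, Matrix.neg_mul, Matrix.mul_assoc, hAA, Matrix.mul_zero, neg_zero]
  rw [transpose_add, transpose_one, transpose_smul]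
  have h1 : (1 + c • Aᵀ) * J n R = J n R + c • -(J n R * A) := by
    rw [Matrix.add_mul, Matrix.one_mul, Matrix.smul_mul, hA]
  rw [h1, Matrix.add_mul]
  have h2 : (c • -(J n R * A)) * (1 + c • A) = c • -(J n R * A) := by
    rw [Matrix.mul_add, Matrix.mul_one, Matrix.smul_mul, Matrix.mul_smul, Matrix.neg_mul,
      Matrix.mul_assoc, hAA, Matrix.mul_zero, neg_zero, smul_zero, smul_zero, add_zero]
  rw [h2, Matrix.mul_add, Matrix.mul_one, Matrix.mul_smul]
  module

lemma Qm_self_sq (v : n ⊕ n → R) : Qm v v * Qm v v = 0 := by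
  rw [Qm_mul_Qm, om_self, zero_smul]

lemma Tm_mem (v : n ⊕ n → R) (c : R) : Tm v c ∈ symplecticGroup n R :=
  mem_one_add (Qm_transpose_mul_J v v) (Qm_self_sq v) c

lemma Em_A_sq {u v : n ⊕ n → R} (h : om u v = 0) :
    (Qm u v + Qm v u) * (Qm u v + Qm v u) = 0 := by
  have h' : om v u = 0 := by rw [om_antisymm, h, neg_zero]
  rw [Matrix.add_mul, Matrix.mul_add, Matrix.mul_add]
  simp [Qm_mul_Qm, h, h', om_self]

lemma Em_AT {u v : n ⊕ n → R} :
    (Qm u v + Qm v u)ᵀ * J n R = -(J n R * (Qm u v + Qm v u)) := by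
  rw [transpose_add, Matrix.add_mul, Qm_transpose_mul_J, Qm_transpose_mul_J,
    Matrix.mul_add]
  abel

lemma Em_mem {u v : n ⊕ n → R} (h : om u v = 0) (c : R) :
    Em u v c ∈ symplecticGroup n R :=
  mem_one_add Em_AT (Em_A_sq h) c

lemma Tm_mul_Tm (v : n ⊕ n → R) (a b : R) : Tm v a * Tm v b = Tm v (a + b) := by
  rw [Tm, Tm, Tm, one_add_mul_one_add, Qm_self_sq, smul_zero, add_zero, add_smul]

lemma Tm_zero (v : n ⊕ n → R) : Tm v 0 = 1 := by rw [Tm, zero_smul, add_zero]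

lemma Tm_smul (v : n ⊕ n → R) (c a : R) : Tm (c • v) a = Tm v (c * c * a) := by
  rw [Tm, Tm, Qm_smul, smul_smul, mul_comm a]

lemma Qm_conj {M : Matrix (n ⊕ n) (n ⊕ n) R} (hM : M ∈ symplecticGroup n R)
    (a b : n ⊕ n → R) : M * Qm a b = Qm (M *ᵥ a) (M *ᵥ b) * M := by
  have h2 := (SymplecticGroup.mem_iff').mp hM
  calc M * Qm a b = M * vecMulVec a b * J n R := by rw [Qm, Matrix.mul_assoc]
    _ = M * vecMulVec a b * (Mᵀ * J n R * M) := by rw [h2]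
    _ = M * vecMulVec a b * Mᵀ * J n R * M := by simp only [Matrix.mul_assoc]
    _ = Qm (M *ᵥ a) (M *ᵥ b) * M := by rw [vmv_map, Qm]

lemma Tm_conj {M : Matrix (n ⊕ n) (n ⊕ n) R} (hM : M ∈ symplecticGroup n R)
    (v : n ⊕ n → R) (c : R) : M * Tm v c = Tm (M *ᵥ v) c * M := by
  rw [Tm, Tm, Matrix.mul_add, Matrix.add_mul, Matrix.mul_one, Matrix.one_mul,
    Matrix.mul_smul, Matrix.smul_mul, Qm_conj hM]

lemma Em_conj {M : Matrix (n ⊕ n) (n ⊕ n) R} (hM : M ∈ symplecticGroup n R)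
    (u v : n ⊕ n → R) (c : R) : M * Em u v c = Em (M *ᵥ u) (M *ᵥ v) c * M := by
  rw [Em, Em, Matrix.mul_add, Matrix.add_mul, Matrix.mul_one, Matrix.one_mul,
    Matrix.mul_smul, Matrix.smul_mul, Matrix.mul_add, Matrix.add_mul, Qm_conj hM, Qm_conj hM]

lemma E_decomp {u v : n ⊕ n → R} (h : om u v = 0) (c : R) :
    Tm u (-c) * Tm v (-c) * Tm (u + v) c = Em u v c := by
  have h' : om v u = 0 := by rw [om_antisymm, h, neg_zero]
  rw [Tm, Tm, one_add_mul_one_add, Qm_mul_Qm, h, zero_smul, smul_zero, add_zero]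
  have hQ : Qm (u+v) (u+v) = Qm u u + Qm u v + Qm v u + Qm v v := by
    rw [Qm_add_left, Qm_add_right, Qm_add_right]; abel
  rw [show (1 : Matrix (n ⊕ n) (n ⊕ n) R) + ((-c) • Qm u u + (-c) • Qm v v)
      = 1 + (-c) • (Qm u u + Qm v v) from by rw [smul_add], Tm, one_add_mul_one_add]
  rw [hQ, Em]
  have hprod : (Qm u u + Qm v v) * (Qm u u + Qm u v + Qm v u + Qm v v) = 0 := by
    rw [Matrix.add_mul]
    rw [Matrix.mul_add, Matrix.mul_add, Matrix.mul_add, Matrix.mul_add, Matrix.mul_add,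
      Matrix.mul_add]
    simp [Qm_mul_Qm, h, h', om_self]
  rw [hprod, smul_zero, add_zero]
  module

lemma E_mul {u v w : n ⊕ n → R} (huv : om u v = 0) (huw : om u w = 0) (hvw : om v w = 0)
    (c : R) : Em u v c * Em u w c = Em u (v + w) c := by
  have hvu : om v u = 0 := by rw [om_antisymm, huv, neg_zero]
  have hwu : om w u = 0 := by rw [om_antisymm, huw, neg_zero]
  have hwv : om w v = 0 := by rw [om_antisymm, hvw, neg_zero]
  rw [Em, Em, Em, one_add_mul_one_add]
  have hprod : (Qm u v + Qm v u) * (Qm u w + Qm w u) = 0 := by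
    rw [Matrix.add_mul, Matrix.mul_add, Matrix.mul_add]
    simp [Qm_mul_Qm, huv, huw, hvw, hvu, hwu, hwv, om_self]
  rw [hprod, smul_zero, add_zero, Qm_add_right, Qm_add_left]
  module


variable [Nontrivial R]

/-- transvection as an element of the symplectic group -/
def tv (v : n ⊕ n → R) (c : R) : symplecticGroup n R := ⟨Tm v c, Tm_mem v c⟩

/-- action of a symplectic group element on vectors -/
def act (M : symplecticGroup n R) (x : n ⊕ n → R) : n ⊕ n → R := (M : Matrix (n ⊕ n) (n ⊕ n) R) *ᵥ x

lemma act_mul (M N : symplecticGroup n R) (x : n ⊕ n → R) :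
    act (M * N) x = act M (act N x) := by
  simp [act, mulVec_mulVec]

lemma act_one (x : n ⊕ n → R) : act (1 : symplecticGroup n R) x = x := by
  simp [act, Submonoid.coe_one]

lemma act_tv (v x : n ⊕ n → R) (c : R) : act (tv v c) x = x + (c * om v x) • v :=
  Tm_mulVec v x c

lemma tv_mul_tv (v : n ⊕ n → R) (a b : R) : tv v a * tv v b = tv v (a + b) :=
  Subtype.ext (Tm_mul_Tm v a b)

lemma mul_tv (M : symplecticGroup n R) (v : n ⊕ n → R) (c : R) :
    M * tv v c = tv (act M v) c * M :=
  Subtype.ext (Tm_conj M.2 v c)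

lemma om_sp {M : symplecticGroup n R} (x y : n ⊕ n → R) :
    om (act M x) (act M y) = om x y := by
  have h2 := (SymplecticGroup.mem_iff').mp M.2
  set A := (M : Matrix (n ⊕ n) (n ⊕ n) R) with hA
  calc om (A *ᵥ x) (A *ᵥ y) = (A *ᵥ x) ⬝ᵥ (J n R * A) *ᵥ y := by rw [om, mulVec_mulVec]
    _ = (x ᵥ* Aᵀ) ⬝ᵥ (J n R * A) *ᵥ y := by rw [vecMul_transpose]
    _ = x ᵥ* (Aᵀ * (J n R * A)) ⬝ᵥ y := by rw [dotProduct_mulVec, vecMul_vecMul]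
    _ = x ᵥ* (J n R) ⬝ᵥ y := by rw [← Matrix.mul_assoc, h2]
    _ = om x y := by rw [om, dotProduct_mulVec]

/-- unimodular vector -/
def Uni (v : n ⊕ n → R) : Prop := ∃ i, IsUnit (v i)

/-- support condition : coordinates in the pairs indexed by `P` vanish -/
def Supp (P : Finset n) (w : n ⊕ n → R) : Prop :=
  ∀ j ∈ P, w (Sum.inl j) = 0 ∧ w (Sum.inr j) = 0

lemma Supp_sub {P : Finset n} {u v : n ⊕ n → R} (hu : Supp P u) (hv : Supp P v) :
    Supp P (u - v) := fun j hj => by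
  simp [Pi.sub_apply, (hu j hj).1, (hu j hj).2, (hv j hj).1, (hv j hj).2]

lemma Supp_add {P : Finset n} {u v : n ⊕ n → R} (hu : Supp P u) (hv : Supp P v) :
    Supp P (u + v) := fun j hj => by
  simp [Pi.add_apply, (hu j hj).1, (hu j hj).2, (hv j hj).1, (hv j hj).2]

lemma Supp_smul {P : Finset n} {u : n ⊕ n → R} (c : R) (hu : Supp P u) :
    Supp P (c • u) := fun j hj => by
  simp [Pi.smul_apply, (hu j hj).1, (hu j hj).2]

lemma Supp_e {P : Finset n} {j₀ : n} (h : j₀ ∉ P) (i : n ⊕ n)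
    (hi : i = Sum.inl j₀ ∨ i = Sum.inr j₀) : Supp P (e i : n ⊕ n → R) := by
  intro j hj
  have hne : j ≠ j₀ := fun hEq => h (hEq ▸ hj)
  rcases hi with rfl | rfl <;>
    constructor <;> simp [e, Pi.single_apply, hne]

lemma Uni_e (i : n ⊕ n) : Uni (e i : n ⊕ n → R) := ⟨i, by simp [e]⟩

section Local

variable (hU : ∀ a b : R, IsUnit (a + b) → IsUnit a ∨ IsUnit b)
include hU

lemma isUnit_add_left' {a b : R} (ha : IsUnit a) (hb : ¬IsUnit b) : IsUnit (a + b) := by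
  rcases hU (a + b) (-b) (by simpa using ha) with h | h
  · exact h
  · exact absurd (by simpa using h) hb

lemma isUnit_sum {α : Type*} {s : Finset α} {f : α → R} (h : IsUnit (∑ i ∈ s, f i)) :
    ∃ i ∈ s, IsUnit (f i) := by
  classical
  induction s using Finset.induction_on with
  | empty => rw [Finset.sum_empty] at h; exact absurd h not_isUnit_zero
  | insert a s hx ih =>
    rw [Finset.sum_insert hx] at h
    rcases hU _ _ h with h' | h'
    · exact ⟨a, Finset.mem_insert_self a s, h'⟩
    · obtain ⟨i, hi, hu⟩ := ih h'
      exact ⟨i, Finset.mem_insert_of_mem hi, hu⟩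

lemma om_unit_uni_right {v x : n ⊕ n → R} (h : IsUnit (om v x)) : Uni x := by
  rw [om_def] at h
  obtain ⟨i, _, hu⟩ := isUnit_sum hU h
  rcases hU _ _ (by simpa [sub_eq_add_neg] using hu) with h' | h'
  · exact ⟨Sum.inl i, isUnit_of_mul_isUnit_right h'⟩
  · exact ⟨Sum.inr i, isUnit_of_mul_isUnit_right (by simpa using h')⟩

lemma om_unit_uni_left {v x : n ⊕ n → R} (h : IsUnit (om x v)) : Uni x := by
  rw [om_antisymm] at h
  exact om_unit_uni_right hU (by simpa using h)

lemma col_uni (M : symplecticGroup n R) (j : n ⊕ n) : Uni (act M (e j)) := by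
  have hact : act M (e j) = fun i => (M : Matrix (n ⊕ n) (n ⊕ n) R) i j := by
    funext i; simp [act, e, mulVec_single]
  by_contra hcon
  rw [hact] at hcon
  simp only [Uni, not_exists] at hcon
  have hdet := SymplecticGroup.symplectic_det M.2
  rw [det_apply] at hdet
  obtain ⟨σ, _, hu⟩ := isUnit_sum hU hdet
  have hprod : IsUnit (∏ i, (M : Matrix (n ⊕ n) (n ⊕ n) R) (σ i) i) := by
    rcases Int.units_eq_one_or (Equiv.Perm.sign σ) with h | h <;> rw [h] at hu
    · simpa using hu
    · rw [Units.smul_def] at hu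
      simpa using hu
  rw [← Finset.mul_prod_erase Finset.univ _ (Finset.mem_univ j)] at hprod
  exact hcon (σ j) (isUnit_of_mul_isUnit_left hprod)

end Local

/-- generating set of transvections with support away from `P` -/
def TS (P : Finset n) : Set (symplecticGroup n R) :=
  {x | ∃ v c, Supp P v ∧ Uni v ∧ x = tv v c}

/-- subgroup generated by transvections supported away from `P` -/
def HK (P : Finset n) : Subgroup (symplecticGroup n R) := Subgroup.closure (TS P)

/-- subgroup of symplectic maps fixing a given vector -/
def Fixer1 (x : n ⊕ n → R) : Subgroup (symplecticGroup n R) where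
  carrier := {M | act M x = x}
  one_mem' := act_one x
  mul_mem' := by
    intro a b ha hb
    simp only [Set.mem_setOf_eq] at *
    rw [act_mul, hb, ha]
  inv_mem' := by
    intro a ha
    simp only [Set.mem_setOf_eq] at *
    conv_lhs => rw [← ha]
    rw [← act_mul, inv_mul_cancel, act_one]

lemma tv_fix_of_om_zero {v x : n ⊕ n → R} (c : R) (h : om v x = 0) :
    act (tv v c) x = x := by
  rw [act_tv, h, mul_zero, zero_smul, add_zero]

lemma closure_le_Fixer1 {S : Set (symplecticGroup n R)} {x : n ⊕ n → R}
    (h : ∀ y ∈ S, ∃ v c, om v x = 0 ∧ y = tv v c) : Subgroup.closure S ≤ Fixer1 x := by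
  rw [Subgroup.closure_le]
  intro y hy
  obtain ⟨v, c, hv, rfl⟩ := h y hy
  exact tv_fix_of_om_zero c hv

lemma supp_om_e_inl {P : Finset n} {v : n ⊕ n → R} (hv : Supp P v) {j : n} (hj : j ∈ P) :
    om v (e (Sum.inl j)) = 0 := by rw [om_e_inl_right]; exact (hv j hj).2

lemma supp_om_e_inr {P : Finset n} {v : n ⊕ n → R} (hv : Supp P v) {j : n} (hj : j ∈ P) :
    om v (e (Sum.inr j)) = 0 := by rw [om_e_inr_right, (hv j hj).1, neg_zero]

lemma HK_le_Fixer1 {P : Finset n} {j : n} (hj : j ∈ P) (i : n ⊕ n)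
    (hi : i = Sum.inl j ∨ i = Sum.inr j) : HK (R := R) P ≤ Fixer1 (e i) := by
  apply closure_le_Fixer1
  rintro y ⟨v, c, hs, _, rfl⟩
  refine ⟨v, c, ?_, rfl⟩
  rcases hi with rfl | rfl
  · exact supp_om_e_inl hs hj
  · exact supp_om_e_inr hs hj


/-- fixing all base vectors of pairs in `P` -/
def FixP (P : Finset n) (M : symplecticGroup n R) : Prop :=
  ∀ j ∈ P, act M (e (Sum.inl j)) = e (Sum.inl j) ∧ act M (e (Sum.inr j)) = e (Sum.inr j)

lemma HK_fix {P : Finset n} {M : symplecticGroup n R} (hM : M ∈ HK P) : FixP P M := by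
  intro j hj
  exact ⟨HK_le_Fixer1 hj _ (Or.inl rfl) hM, HK_le_Fixer1 hj _ (Or.inr rfl) hM⟩

section Moves

variable (hU : ∀ a b : R, IsUnit (a + b) → IsUnit a ∨ IsUnit b)
include hU

lemma moveA {P : Finset n} {u v : n ⊕ n → R} (hsu : Supp P u) (hsv : Supp P v)
    (h : IsUnit (om u v)) : ∃ M ∈ HK P, act M u = v := by
  have hw : IsUnit (om u (v - u)) := by
    rw [om_sub_right, om_self, sub_zero]; exact h
  refine ⟨tv (v - u) (-((h.unit⁻¹ : Rˣ) : R)), ?_, ?_⟩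
  · exact Subgroup.subset_closure ⟨v - u, _, Supp_sub hsv hsu, om_unit_uni_right hU hw, rfl⟩
  · rw [act_tv]
    have h1 : om (v - u) u = -(om u v) := by
      rw [om_sub_left, om_self, sub_zero, om_antisymm]
    rw [h1]
    have h2 : -((h.unit⁻¹ : Rˣ) : R) * -(om u v) = 1 := by
      rw [neg_mul_neg]
      exact h.val_inv_mul
    rw [h2, one_smul]
    abel

lemma dualv {P : Finset n} {u : n ⊕ n → R} (hsu : Supp P u) (hui : Uni u) :
    ∃ a, Supp P a ∧ IsUnit (om u a) := by
  obtain ⟨i, hi⟩ := hui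
  cases i with
  | inl j =>
    have hj : j ∉ P := fun hj => by rw [(hsu j hj).1] at hi; exact not_isUnit_zero hi
    exact ⟨e (Sum.inr j), Supp_e hj _ (Or.inr rfl), by rw [om_e_inr_right]; exact hi.neg⟩
  | inr j =>
    have hj : j ∉ P := fun hj => by rw [(hsu j hj).2] at hi; exact not_isUnit_zero hi
    exact ⟨e (Sum.inl j), Supp_e hj _ (Or.inl rfl), by rw [om_e_inl_right]; exact hi⟩

lemma moveC {P : Finset n} {u v : n ⊕ n → R} (hsu : Supp P u) (hsv : Supp P v)
    (huu : Uni u) (huv : Uni v) : ∃ M ∈ HK P, act M u = v := by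
  by_cases h : IsUnit (om u v)
  · exact moveA hU hsu hsv h
  obtain ⟨a, hsa, ha⟩ := dualv hU hsu huu
  obtain ⟨b, hsb, hb⟩ := dualv hU hsv huv
  -- find intermediate w with om u w and om w v units
  have key : ∃ w, Supp P w ∧ IsUnit (om u w) ∧ IsUnit (om w v) := by
    by_cases hva : IsUnit (om v a)
    · exact ⟨a, hsa, ha, by rw [om_antisymm]; exact hva.neg⟩
    by_cases hub : IsUnit (om u b)
    · exact ⟨b, hsb, hub, by rw [om_antisymm]; exact hb.neg⟩
    refine ⟨a + b, Supp_add hsa hsb, ?_, ?_⟩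
    · rw [om_add_right]; exact isUnit_add_left' hU ha hub
    · rw [om_antisymm, om_add_right, add_comm]
      exact (isUnit_add_left' hU hb hva).neg
  obtain ⟨w, hsw, hw1, hw2⟩ := key
  obtain ⟨M1, hM1, hact1⟩ := moveA hU hsu hsw hw1
  obtain ⟨M2, hM2, hact2⟩ := moveA hU hsw hsv hw2
  exact ⟨M2 * M1, mul_mem hM2 hM1, by rw [act_mul, hact1, hact2]⟩

/-- generating set for the second move: transvections also vanishing at `inr j₀` -/
def TS2 (P : Finset n) (j₀ : n) : Set (symplecticGroup n R) :=
  {x | ∃ v c, Supp P v ∧ Uni v ∧ v (Sum.inr j₀) = 0 ∧ x = tv v c}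

def HK2 (P : Finset n) (j₀ : n) : Subgroup (symplecticGroup n R) := Subgroup.closure (TS2 P j₀)

lemma HK2_le_HK {P : Finset n} {j₀ : n} : HK2 (R := R) P j₀ ≤ HK P :=
  Subgroup.closure_mono (fun x ⟨v, c, h1, h2, _, h4⟩ => ⟨v, c, h1, h2, h4⟩)

lemma HK2_fix {P : Finset n} {j₀ : n} {M : symplecticGroup n R} (hM : M ∈ HK2 P j₀) :
    act M (e (Sum.inl j₀)) = e (Sum.inl j₀) := by
  refine closure_le_Fixer1 ?_ hM
  rintro y ⟨v, c, _, _, hz, rfl⟩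
  exact ⟨v, c, by rw [om_e_inl_right]; exact hz, rfl⟩

lemma moveD {P : Finset n} {j₀ : n} (hj₀ : j₀ ∉ P) {v' : n ⊕ n → R} (hs : Supp P v')
    (h1 : v' (Sum.inr j₀) = 1) :
    ∃ M ∈ HK2 P j₀, act M v' = e (Sum.inr j₀) := by
  set c₁ : R := v' (Sum.inl j₀) - 1 with hc₁
  set v'' : n ⊕ n → R := v' + (c₁ * -1) • e (Sum.inl j₀) with hv''
  have hstep1 : act (tv (e (Sum.inl j₀)) c₁) v' = v'' := by
    rw [act_tv, om_e_inl_left, h1]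
  have hv''l : v'' (Sum.inl j₀) = 1 := by
    simp [hv'', e, Pi.single_apply, hc₁]; try ring
  have hv''r : v'' (Sum.inr j₀) = 1 := by
    simp [hv'', e, Pi.single_apply, h1]
  have hsv'' : Supp P v'' := Supp_add hs (Supp_smul _ (Supp_e hj₀ _ (Or.inl rfl)))
  set w₂ : n ⊕ n → R := e (Sum.inr j₀) - v'' with hw₂
  have hw₂om : om w₂ v'' = 1 := by
    rw [hw₂, om_sub_left, om_self, sub_zero, om_e_inr_left, hv''l]
  have hstep2 : act (tv w₂ 1) v'' = e (Sum.inr j₀) := by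
    rw [act_tv, hw₂om, mul_one, one_smul, hw₂]
    abel
  have huw₂ : Uni w₂ := by
    apply om_unit_uni_right hU (v := v'')
    rw [om_antisymm, hw₂om]
    exact isUnit_one.neg
  refine ⟨tv w₂ 1 * tv (e (Sum.inl j₀)) c₁, ?_, ?_⟩
  · refine mul_mem (Subgroup.subset_closure ?_) (Subgroup.subset_closure ?_)
    · refine ⟨w₂, 1, Supp_sub (Supp_e hj₀ _ (Or.inr rfl)) hsv'', huw₂, ?_, rfl⟩
      simp [hw₂, e, Pi.single_apply, hv''r]
    · refine ⟨e (Sum.inl j₀), c₁, Supp_e hj₀ _ (Or.inl rfl), Uni_e _, ?_, rfl⟩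
      simp [e, Pi.single_apply]
  · rw [act_mul, hstep1, hstep2]

end Moves


lemma act_eq_id (M : symplecticGroup n R) (h : ∀ j, act M (e j) = e j) : M = 1 := by
  apply Subtype.ext
  ext i j'
  have h1 : act M (e j') i = (M : Matrix (n ⊕ n) (n ⊕ n) R) i j' := by
    simp [act, e, mulVec_single]
  have h2 := congrFun (h j') i
  rw [h1] at h2
  rw [h2]
  simp [e, Pi.single_apply, Matrix.one_apply, eq_comm]

section MainInd

variable (hU : ∀ a b : R, IsUnit (a + b) → IsUnit a ∨ IsUnit b)
include hU

lemma main_ind : ∀ (d : ℕ) (P : Finset n) (M : symplecticGroup n R),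
    (Finset.univ : Finset n).card ≤ P.card + d → FixP P M → M ∈ HK P := by
  intro d
  induction d with
  | zero =>
    intro P M hcard hfix
    have hP : P = Finset.univ :=
      Finset.eq_univ_of_card P (le_antisymm (Finset.card_le_univ P) (by simpa using hcard))
    subst hP
    have : M = 1 := by
      apply act_eq_id
      intro j
      cases j with
      | inl j => exact (hfix j (Finset.mem_univ j)).1
      | inr j => exact (hfix j (Finset.mem_univ j)).2
    rw [this]; exact one_mem _
  | succ d ih =>
    intro P M hcard hfix
    by_cases hP : P = Finset.univ
    · subst hP
      have : M = 1 := by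
        apply act_eq_id
        intro j
        cases j with
        | inl j => exact (hfix j (Finset.mem_univ j)).1
        | inr j => exact (hfix j (Finset.mem_univ j)).2
      rw [this]; exact one_mem _
    obtain ⟨j₀, hj₀⟩ : ∃ j₀, j₀ ∉ P := by
      by_contra hc
      push_neg at hc
      exact hP (Finset.eq_univ_iff_forall.mpr hc)
    -- supp of images
    have suppIm : ∀ (M' : symplecticGroup n R), FixP P M' →
        ∀ i, (i = Sum.inl j₀ ∨ i = Sum.inr j₀) → Supp P (act M' (e i)) := by
      intro M' hfix' i hi j hj
      have hne : j ≠ j₀ := fun h => hj₀ (h ▸ hj)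
      constructor
      · have h1 : (act M' (e i)) (Sum.inl j) = om (e (Sum.inr j)) (act M' (e i)) := by
          rw [om_e_inr_left]
        rw [h1, ← (hfix' j hj).2, om_sp, om_e_inr_left]
        rcases hi with rfl | rfl
        · simp [e, Pi.single_apply, hne]
        · simp [e, Pi.single_apply, hne]
      · have h1 : (act M' (e i)) (Sum.inr j) = -om (e (Sum.inl j)) (act M' (e i)) := by
          rw [om_e_inl_left, neg_neg]
        rw [h1, ← (hfix' j hj).1, om_sp, om_e_inl_left]
        rcases hi with rfl | rfl
        · simp [e, Pi.single_apply, hne]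
        · simp [e, Pi.single_apply, hne]
    -- step 1 : move the image of e (inl j₀) back
    obtain ⟨M1, hM1, hact1⟩ := moveC hU (suppIm M hfix _ (Or.inl rfl))
      (Supp_e hj₀ _ (Or.inl rfl)) (col_uni hU M _) (Uni_e _)
    set M' := M1 * M with hM'
    have hfix' : FixP P M' := by
      intro j hj
      have h1 := HK_fix hM1 j hj
      have h2 := hfix j hj
      constructor <;> rw [act_mul]
      · rw [h2.1, h1.1]
      · rw [h2.2, h1.2]
    have hM'l : act M' (e (Sum.inl j₀)) = e (Sum.inl j₀) := by
      rw [act_mul, hact1]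
    -- step 2 : move the image of e (inr j₀) back
    set v' := act M' (e (Sum.inr j₀)) with hv'
    have hsv' : Supp P v' := suppIm M' hfix' _ (Or.inr rfl)
    have hv'r : v' (Sum.inr j₀) = 1 := by
      have h1 : v' (Sum.inr j₀) = -om (e (Sum.inl j₀)) v' := by
        rw [om_e_inl_left, neg_neg]
      rw [h1, hv', ← hM'l, om_sp, om_e_inl_left]
      simp [e, Pi.single_apply]
    obtain ⟨M2, hM2, hact2⟩ := moveD hU hj₀ hsv' hv'r
    set M'' := M2 * M' with hM''
    have hfix'' : FixP (insert j₀ P) M'' := by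
      intro j hj
      rcases Finset.mem_insert.mp hj with rfl | hj'
      · constructor
        · rw [act_mul, hM'l, HK2_fix hU hM2]
        · rw [act_mul, ← hv', hact2]
      · have h1 := HK_fix (HK2_le_HK hU hM2) j hj'
        have h2 := hfix' j hj'
        constructor <;> rw [act_mul]
        · rw [h2.1, h1.1]
        · rw [h2.2, h1.2]
    have hcard' : (Finset.univ : Finset n).card ≤ (insert j₀ P).card + d := by
      rw [Finset.card_insert_of_notMem hj₀]
      omega
    have hsub : TS (insert j₀ P) ⊆ TS (R := R) P := by
      rintro x ⟨v, c, h1, h2, h4⟩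
      exact ⟨v, c, fun j hj => h1 j (Finset.mem_insert_of_mem hj), h2, h4⟩
    have hMem'' : M'' ∈ HK P :=
      Subgroup.closure_mono hsub (ih (insert j₀ P) M'' hcard' hfix'')
    have hMfin : M = M1⁻¹ * (M2⁻¹ * M'') := by
      rw [hM'', hM']
      group
    rw [hMfin]
    exact mul_mem (inv_mem hM1) (mul_mem (inv_mem (HK2_le_HK hU hM2)) hMem'')

lemma gen_top (M : symplecticGroup n R) : M ∈ HK (∅ : Finset n) :=
  main_ind hU (Finset.univ : Finset n).card ∅ M (by simp) (fun j hj => absurd hj (Finset.notMem_empty j))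

end MainInd


section ZModFacts

variable {p m : ℕ}

lemma zmod_p_not_unit (hp : p.Prime) (hm : 1 ≤ m) [NeZero (p ^ m)] [Nontrivial (ZMod (p ^ m))] :
    ¬IsUnit ((p : ZMod (p ^ m))) := by
  intro h
  have h2 := h.pow m
  rw [← Nat.cast_pow, ZMod.natCast_self] at h2
  exact not_isUnit_zero h2

lemma zmod_unit_or_dvd (hp : p.Prime) (hm : 1 ≤ m) [NeZero (p ^ m)] (a : ZMod (p ^ m)) :
    IsUnit a ∨ (p : ZMod (p ^ m)) ∣ a := by
  have ha : ((a.val : ℕ) : ZMod (p ^ m)) = a := by rw [ZMod.natCast_val, ZMod.cast_id]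
  by_cases hd : p ∣ a.val
  · right
    obtain ⟨t, ht⟩ := hd
    exact ⟨(t : ZMod (p ^ m)), by rw [← ha, ht]; push_cast; ring⟩
  · left
    rw [← ha]
    exact (ZMod.isUnit_iff_coprime a.val (p ^ m)).mpr
      (Nat.Coprime.pow_right m ((Nat.Prime.coprime_iff_not_dvd hp).mpr hd).symm)

lemma zmod_hU (hp : p.Prime) (hm : 1 ≤ m) [NeZero (p ^ m)] [Nontrivial (ZMod (p ^ m))] :
    ∀ a b : ZMod (p ^ m), IsUnit (a + b) → IsUnit a ∨ IsUnit b := by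
  intro a b h
  by_contra hc
  push_neg at hc
  obtain ⟨ha, hb⟩ := hc
  have hda := (zmod_unit_or_dvd hp hm a).resolve_left ha
  have hdb := (zmod_unit_or_dvd hp hm b).resolve_left hb
  obtain ⟨c, hcc⟩ := dvd_add hda hdb
  rw [hcc] at h
  exact zmod_p_not_unit hp hm (isUnit_of_mul_isUnit_left h)

lemma zmod_nat_unit (hp : p.Prime) (hm : 1 ≤ m) [NeZero (p ^ m)] (k : ℕ) (hk : ¬ p ∣ k) :
    IsUnit ((k : ℕ) : ZMod (p ^ m)) :=
  (ZMod.isUnit_iff_coprime k (p ^ m)).mpr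
    (Nat.Coprime.pow_right m ((Nat.Prime.coprime_iff_not_dvd hp).mpr hk).symm)

end ZModFacts

end SpGen

open SpGen

/-- Let `p` be a prime, `m ≥ 1`, `D = p^m` and `g ≥ 2`, with moreover `m ≥ 2` and `g ≥ 3`
when `p ∈ {2, 3}`. Then the subgroup of `Sp(2g, ℤ/Dℤ)` generated by all `D`-th powers is
the whole group. -/
theorem symplectic_power_subgroup_eq_top (p m g : ℕ) (hp : p.Prime) (hm : 1 ≤ m)
    (hg : 2 ≤ g) (h23 : p = 2 ∨ p = 3 → 2 ≤ m ∧ 3 ≤ g) :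
    Subgroup.closure
        {x : Matrix.symplecticGroup (Fin g) (ZMod (p ^ m)) |
          ∃ A : Matrix.symplecticGroup (Fin g) (ZMod (p ^ m)), x = A ^ (p ^ m)} = ⊤ := by
  haveI hFact : Fact p.Prime := ⟨hp⟩
  haveI : NeZero (p ^ m) := ⟨pow_ne_zero m hp.pos.ne'⟩
  haveI : Fact (1 < p ^ m) := ⟨lt_of_lt_of_le hp.one_lt (Nat.le_self_pow (by omega) p)⟩
  have hU : ∀ a b : ZMod (p ^ m), IsUnit (a + b) → IsUnit a ∨ IsUnit b := zmod_hU hp hm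
  set N := Subgroup.closure
      {x : Matrix.symplecticGroup (Fin g) (ZMod (p ^ m)) |
        ∃ A : Matrix.symplecticGroup (Fin g) (ZMod (p ^ m)), x = A ^ (p ^ m)} with hN
  have key : ∀ x : Matrix.symplecticGroup (Fin g) (ZMod (p ^ m)), x ^ (p ^ m) ∈ N :=
    fun x => Subgroup.subset_closure ⟨x, rfl⟩
  haveI hNormal : N.Normal := by
    constructor
    intro x hx g'
    induction hx using Subgroup.closure_induction with
    | mem y hy =>
      obtain ⟨A, rfl⟩ := hy
      rw [← conj_pow]
      exact key _
    | one => simpa using one_mem N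
    | mul a b _ _ ha hb =>
      have hE : g' * (a * b) * g'⁻¹ = (g' * a * g'⁻¹) * (g' * b * g'⁻¹) := by group
      rw [hE]; exact mul_mem ha hb
    | inv a _ ha =>
      have hE : g' * a⁻¹ * g'⁻¹ = (g' * a * g'⁻¹)⁻¹ := by group
      rw [hE]; exact inv_mem ha
  set π : Matrix.symplecticGroup (Fin g) (ZMod (p ^ m)) →*
      Abelianization (Matrix.symplecticGroup (Fin g) (ZMod (p ^ m)) ⧸ N) :=
    (Abelianization.of).comp (QuotientGroup.mk' N) with hπ
  -- the universal transvection value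
  have h0g : 0 < g := by omega
  set i0 : Fin g := ⟨0, h0g⟩ with hi0
  set v₀ : Fin g ⊕ Fin g → ZMod (p ^ m) := e (Sum.inl i0) with hv₀
  set F : ZMod (p ^ m) → Abelianization (Matrix.symplecticGroup (Fin g) (ZMod (p ^ m)) ⧸ N) :=
    fun c => π (tv v₀ c) with hF
  have hSuppAll : ∀ v : Fin g ⊕ Fin g → ZMod (p ^ m), Supp ∅ v :=
    fun v j hj => absurd hj (Finset.notMem_empty j)
  have hFv : ∀ (v : Fin g ⊕ Fin g → ZMod (p ^ m)), Uni v →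
      ∀ c, π (tv v c) = F c := by
    intro v hUv c
    obtain ⟨M, _, hact⟩ := moveC hU (hSuppAll v₀) (hSuppAll v) (Uni_e _) hUv
    have h := mul_tv M v₀ c
    rw [hact] at h
    have h2 := congrArg π h
    rw [_root_.map_mul, _root_.map_mul, mul_comm (π (tv v c)) (π M)] at h2
    exact (mul_left_cancel h2).symm
  have hFadd : ∀ a b, F (a + b) = F a * F b := by
    intro a b
    rw [hF]
    simp only
    rw [← _root_.map_mul, tv_mul_tv]
  have hF0 : F 0 = 1 := by
    have : tv v₀ (0 : ZMod (p ^ m)) = 1 := Subtype.ext (Tm_zero v₀)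
    rw [hF]; simp only; rw [this, _root_.map_one]
  have hFneg : ∀ a, F (-a) = (F a)⁻¹ := by
    intro a
    have h1 : F (-a) * F a = 1 := by rw [← hFadd, neg_add_cancel, hF0]
    exact eq_inv_of_mul_eq_one_left h1
  -- key step : F is identically 1
  have hF1 : ∀ c, F c = 1 := by
    by_cases hg3 : 3 ≤ g
    · -- use the Em relations
      set i1 : Fin g := ⟨1, by omega⟩ with hi1
      set i2 : Fin g := ⟨2, by omega⟩ with hi2
      set u : Fin g ⊕ Fin g → ZMod (p ^ m) := e (Sum.inl i0) with hu
      set v : Fin g ⊕ Fin g → ZMod (p ^ m) := e (Sum.inl i1) with hvv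
      set w : Fin g ⊕ Fin g → ZMod (p ^ m) := e (Sum.inl i2) with hw
      have homll : ∀ a b : Fin g,
          om (e (Sum.inl a)) (e (Sum.inl b) : Fin g ⊕ Fin g → ZMod (p ^ m)) = 0 := by
        intro a b
        rw [om_e_inl_right]
        simp [e, Pi.single_apply]
      have huv : om u v = 0 := homll i0 i1
      have huw : om u w = 0 := homll i0 i2
      have hvw : om v w = 0 := homll i1 i2
      have huvw : om u (v + w) = 0 := by rw [om_add_right, huv, huw, add_zero]
      have hne10 : i1 ≠ i0 := by simp [hi1, hi0, Fin.ext_iff]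
      have hUnie : ∀ (z : Fin g ⊕ Fin g → ZMod (p ^ m)) (i : Fin g ⊕ Fin g),
          z i = 1 → Uni z := fun z i hz => ⟨i, by rw [hz]; exact isUnit_one⟩
      have hv1 : v (Sum.inl i1) = 1 := by simp [hvv, e, Pi.single_apply]
      have hu1 : u (Sum.inl i1) = 0 := by simp [hu, e, Pi.single_apply, hne10]
      have hw1 : w (Sum.inl i1) = 0 := by
        simp [hw, e, Pi.single_apply, show i1 ≠ i2 by simp [hi1, hi2, Fin.ext_iff]]
      have hu2 : u (Sum.inl i2) = 0 := by
        simp [hu, e, Pi.single_apply, show i2 ≠ i0 by simp [hi2, hi0, Fin.ext_iff]]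
      have hw2 : w (Sum.inl i2) = 1 := by simp [hw, e, Pi.single_apply]
      -- π value of the Em elements
      have hE : ∀ (a b : Fin g ⊕ Fin g → ZMod (p ^ m)) (hab : om a b = 0), Uni a → Uni b →
          Uni (a + b) → ∀ c, π (⟨Em a b c, Em_mem hab c⟩ :
            Matrix.symplecticGroup (Fin g) (ZMod (p ^ m))) = (F c)⁻¹ := by
        intro a b hab hUa hUb hUab c
        have hmat : tv a (-c) * tv b (-c) * tv (a + b) c
            = (⟨Em a b c, Em_mem hab c⟩ :
              Matrix.symplecticGroup (Fin g) (ZMod (p ^ m))) := by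
          apply Subtype.ext
          rw [Submonoid.coe_mul, Submonoid.coe_mul]
          exact E_decomp hab c
        have h2 := congrArg π hmat
        rw [_root_.map_mul, _root_.map_mul, hFv a hUa, hFv b hUb, hFv (a + b) hUab, hFneg] at h2
        rw [← h2, mul_assoc, inv_mul_cancel, mul_one]
      intro c
      have hEuv := hE u v huv (Uni_e _) (Uni_e _)
        (hUnie _ (Sum.inl i1) (by simp only [Pi.add_apply, hu1, hv1, zero_add])) c
      have hEuw := hE u w huw (Uni_e _) (Uni_e _)
        (hUnie _ (Sum.inl i2) (by simp only [Pi.add_apply, hu2, hw2, zero_add])) c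
      have hEuvw := hE u (v + w) huvw (Uni_e _)
        (hUnie _ (Sum.inl i1) (by simp only [Pi.add_apply, hv1, hw1, add_zero]))
        (hUnie _ (Sum.inl i1) (by simp only [Pi.add_apply, hu1, hv1, hw1, zero_add, add_zero])) c
      have hmul : (⟨Em u v c, Em_mem huv c⟩ :
            Matrix.symplecticGroup (Fin g) (ZMod (p ^ m)))
          * ⟨Em u w c, Em_mem huw c⟩ = ⟨Em u (v + w) c, Em_mem huvw c⟩ := by
        apply Subtype.ext
        rw [Submonoid.coe_mul]
        exact E_mul huv huw hvw c
      have h3 := congrArg π hmul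
      rw [_root_.map_mul, hEuv, hEuw, hEuvw] at h3
      have h4 : (F c)⁻¹ = 1 := by
        have h5 : (F c)⁻¹ * (F c)⁻¹ = (F c)⁻¹ * 1 := by rw [mul_one]; exact h3
        exact mul_left_cancel h5
      exact inv_eq_one.mp h4
    · -- g = 2, so p ∉ {2,3} ; use the scaling relation
      have hp23 : ¬(p = 2 ∨ p = 3) := fun h => hg3 (h23 h).2
      have hp2 : p ≠ 2 := fun h => hp23 (Or.inl h)
      have hp3 : p ≠ 3 := fun h => hp23 (Or.inr h)
      have htwo : IsUnit (((2 : ℕ) : ZMod (p ^ m))) :=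
        zmod_nat_unit hp hm 2 (fun h => hp2 ((Nat.prime_dvd_prime_iff_eq hp Nat.prime_two).mp h))
      have hthree : IsUnit (((3 : ℕ) : ZMod (p ^ m))) :=
        zmod_nat_unit hp hm 3 (fun h => hp3 ((Nat.prime_dvd_prime_iff_eq hp Nat.prime_three).mp h))
      set t2 : ZMod (p ^ m) := ((2 : ℕ) : ZMod (p ^ m)) with ht2
      set t3 : ZMod (p ^ m) := ((3 : ℕ) : ZMod (p ^ m)) with ht3
      have hscale : ∀ c, F (t2 * t2 * c) = F c := by
        intro c
        have h1 : tv (t2 • v₀) c = tv v₀ (t2 * t2 * c) := Subtype.ext (Tm_smul v₀ t2 c)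
        have hUni2 : Uni (t2 • v₀) := by
          refine ⟨Sum.inl i0, ?_⟩
          have : (t2 • v₀) (Sum.inl i0) = t2 := by simp [hv₀, e, Pi.single_eq_same]
          rw [this]; exact htwo
        have h2 := congrArg π h1
        rw [hFv _ hUni2 c, hFv _ (Uni_e _) _] at h2
        exact h2.symm
      have hF3 : ∀ c, F (t3 * c) = 1 := by
        intro c
        have h4 : t2 * t2 * c = t3 * c + c := by push_cast [ht2, ht3]; ring
        have h5 := hscale c
        rw [h4, hFadd] at h5
        calc F (t3 * c) = F (t3 * c) * F c * (F c)⁻¹ := by group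
          _ = F c * (F c)⁻¹ := by rw [h5]
          _ = 1 := by group
      intro c
      have h6 : t3 * (((hthree.unit⁻¹ : _ˣ) : ZMod (p ^ m)) * c) = c := by
        rw [← mul_assoc, hthree.mul_val_inv, one_mul]
      rw [← h6]
      exact hF3 _
  -- π kills the whole group
  have hπall : ∀ x : Matrix.symplecticGroup (Fin g) (ZMod (p ^ m)), π x = 1 := by
    intro x
    have hx := gen_top hU x
    induction hx using Subgroup.closure_induction with
    | mem y hy =>
      obtain ⟨v, c, _, hUni, rfl⟩ := hy
      rw [hFv v hUni c]; exact hF1 c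
    | one => exact _root_.map_one π
    | mul a b _ _ ha hb => rw [_root_.map_mul, ha, hb, one_mul]
    | inv a _ ha => rw [_root_.map_inv, ha, inv_one]
  -- the quotient is perfect
  have hcommQ : commutator (Matrix.symplecticGroup (Fin g) (ZMod (p ^ m)) ⧸ N) = ⊤ := by
    rw [Subgroup.eq_top_iff']
    intro q
    obtain ⟨x, rfl⟩ := QuotientGroup.mk'_surjective N q
    have h1 : Abelianization.of ((QuotientGroup.mk' N) x) = 1 := hπall x
    exact (QuotientGroup.eq_one_iff _).mp h1
  have hder : ∀ k, derivedSeries (Matrix.symplecticGroup (Fin g) (ZMod (p ^ m)) ⧸ N) k = ⊤ := by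
    intro k
    induction k with
    | zero => rfl
    | succ k ih => rw [derivedSeries_succ, ih, ← commutator_def, hcommQ]
  haveI : Finite (Matrix.symplecticGroup (Fin g) (ZMod (p ^ m)) ⧸ N) := Quotient.finite _
  have hPQ : IsPGroup p (Matrix.symplecticGroup (Fin g) (ZMod (p ^ m)) ⧸ N) := by
    intro q
    obtain ⟨x, rfl⟩ := QuotientGroup.mk'_surjective N q
    exact ⟨m, by rw [← _root_.map_pow]; exact (QuotientGroup.eq_one_iff _).mpr (key x)⟩
  haveI : Group.IsNilpotent (Matrix.symplecticGroup (Fin g) (ZMod (p ^ m)) ⧸ N) :=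
    hPQ.isNilpotent
  obtain ⟨k, hk⟩ := (inferInstance :
    Group.IsSolvable (Matrix.symplecticGroup (Fin g) (ZMod (p ^ m)) ⧸ N)).solvable
  rw [hder k] at hk
  rw [Subgroup.eq_top_iff']
  intro x
  have h1 : (QuotientGroup.mk' N) x ∈ (⊥ : Subgroup _) := hk ▸ Subgroup.mem_top _
  rw [Subgroup.mem_bot] at h1
  exact (QuotientGroup.eq_one_iff _).mp h1
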